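/- Let n ≥ 1 and let f ∈ S_n be a Laurent polynomial in n variables. Then f has vanishing logarithmic Hessian if and only if there exists a matrix A ∈ M(n,ℤ) with det A = ±1 such that the pullback ξ_A^* f depends on at most n−1 variables, i.e. every exponent I ∈ ℤⁿ in the support of ξ_A^* f satisfies I_n = 0. -/

import Mathlib

noncomputable section

/-- The ring of Laurent polynomials in `n` variables over `ℂ`:
`S_n = ℂ[x_1^{±1},…,x_n^{±1}]`, realized as the group algebra of `ℤⁿ`. -/
abbrev LaurentPoly (n : ℕ) := AddMonoidAlgebra ℂ (Fin n → ℤ)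

/-- The `j`-th logarithmic derivative `θ_j f = x_j ∂f/∂x_j = Σ_I a_I I_j x^I`. -/
noncomputable def thetaDeriv {n : ℕ} (j : Fin n) (f : LaurentPoly n) : LaurentPoly n :=
  AddMonoidAlgebra.ofCoeff (Finsupp.sum f.coeff fun I a => Finsupp.single I (a * (I j : ℂ)))

/-- Evaluation of a Laurent polynomial at a point of the torus `(ℂ*)ⁿ`. -/
noncomputable def tEval {n : ℕ} (x : Fin n → ℂˣ) (f : LaurentPoly n) : ℂ :=
  Finsupp.sum f.coeff fun I a => a * ∏ i, ((x i ^ I i : ℂˣ) : ℂ)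

/-- The logarithmic Hessian matrix `Θf = ((θ_j θ_i f))_{i,j}` of `f`,
as a matrix of Laurent polynomials. -/
noncomputable def logHessian {n : ℕ} (f : LaurentPoly n) :
    Matrix (Fin n) (Fin n) (LaurentPoly n) :=
  Matrix.of fun i j => thetaDeriv j (thetaDeriv i f)

/-- The logarithmic Hessian matrix of `f` evaluated at a point `x` of the torus. -/
noncomputable def logHessianAt {n : ℕ} (f : LaurentPoly n) (x : Fin n → ℂˣ) :
    Matrix (Fin n) (Fin n) ℂ :=
  Matrix.of fun i j => tEval x (thetaDeriv j (thetaDeriv i f))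

/-- The pullback `ξ_A^* f` of a Laurent polynomial `f` by the monoidal map
`ξ_A(x) = (∏_j x_j^{a_{1j}}, …, ∏_j x_j^{a_{nj}})`; on exponents this is `I ↦ Aᵀ I`,
since `f(ξ_A x) = Σ_I a_I x^{Aᵀ I}`. -/
noncomputable def monoidalPullback {n : ℕ} (A : Matrix (Fin n) (Fin n) ℤ)
    (f : LaurentPoly n) : LaurentPoly n :=
  AddMonoidAlgebra.ofCoeff (Finsupp.mapDomain (fun I => A.transpose.mulVec I) f.coeff)

namespace HesseAux
open Matrix
variable {n : ℕ}


lemma thetaDeriv_apply (j : Fin n) (f : LaurentPoly n) (K : Fin n → ℤ) :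
    (thetaDeriv j f).coeff K = f.coeff K * (K j : ℂ) := by
  classical
  rw [thetaDeriv, AddMonoidAlgebra.coeff_ofCoeff, Finsupp.sum_apply, Finsupp.sum,
    Finset.sum_congr rfl (fun I _ => Finsupp.single_apply),
    Finset.sum_ite_eq' f.coeff.support K (fun I => f.coeff I * (I j : ℂ))]
  split_ifs with h
  · rfl
  · rw [Finsupp.notMem_support_iff.mp h, zero_mul]

lemma logHessian_apply (f : LaurentPoly n) (i j : Fin n) (K : Fin n → ℤ) :
    (logHessian f i j).coeff K = f.coeff K * (K i : ℂ) * (K j : ℂ) := by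
  rw [logHessian, Matrix.of_apply, thetaDeriv_apply, thetaDeriv_apply]

lemma logHessian_eq_sum (f : LaurentPoly n) (i j : Fin n) :
    logHessian f i j = ∑ K ∈ f.coeff.support,
      AddMonoidAlgebra.single K (f.coeff K * (K i : ℂ) * (K j : ℂ)) := by
  classical
  ext L
  rw [logHessian_apply, AddMonoidAlgebra.coeff_sum, Finset.sum_apply',
    Finset.sum_congr rfl (fun I _ => AddMonoidAlgebra.coeff_single_apply),
    Finset.sum_ite_eq' f.coeff.support L]
  split_ifs with h
  · rfl
  · rw [Finsupp.notMem_support_iff.mp h, zero_mul, zero_mul]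

/-- the matrix whose columns are `g 0, …, g (n-1)`, over `ℂ`. -/
def colMatC (g : Fin n → (Fin n → ℤ)) : Matrix (Fin n) (Fin n) ℂ :=
  Matrix.of fun x y => ((g y x : ℤ) : ℂ)

lemma det_logHessian_eq (f : LaurentPoly n) :
    (logHessian f).det =
      ∑ g ∈ Fintype.piFinset (fun _ : Fin n => f.coeff.support),
        AddMonoidAlgebra.single (∑ i, g i)
          ((∏ i, (f.coeff (g i) * ((g i i : ℤ) : ℂ))) * (colMatC g).det) := by
  classical
  rw [Matrix.det_apply]
  have h1 : ∀ σ : Equiv.Perm (Fin n),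
      (∏ i, logHessian f (σ i) i)
        = ∑ g ∈ Fintype.piFinset (fun _ : Fin n => f.coeff.support),
            AddMonoidAlgebra.single (∑ i, g i)
              (∏ i, (f.coeff (g i) * ((g i (σ i) : ℤ) : ℂ) * ((g i i : ℤ) : ℂ))) := by
    intro σ
    calc (∏ i, logHessian f (σ i) i)
        = ∏ i, (∑ K ∈ f.coeff.support,
            AddMonoidAlgebra.single K (f.coeff K * ((K (σ i) : ℤ) : ℂ) * ((K i : ℂ))) : LaurentPoly n) :=
          Finset.prod_congr rfl fun i _ => logHessian_eq_sum f (σ i) i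
      _ = ∑ g ∈ Fintype.piFinset (fun _ : Fin n => f.coeff.support),
            (∏ i, AddMonoidAlgebra.single (g i)
              (f.coeff (g i) * ((g i (σ i) : ℤ) : ℂ) * ((g i i : ℤ) : ℂ)) : LaurentPoly n) :=
          Finset.prod_univ_sum _ _
      _ = _ := Finset.sum_congr rfl fun g _ => (AddMonoidAlgebra.prod_single _ _ _)
  calc (∑ σ : Equiv.Perm (Fin n), Equiv.Perm.sign σ • ∏ i, logHessian f (σ i) i)
      = ∑ σ : Equiv.Perm (Fin n), ∑ g ∈ Fintype.piFinset (fun _ : Fin n => f.coeff.support),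
          AddMonoidAlgebra.single (∑ i, g i)
            (Equiv.Perm.sign σ •
              ∏ i, (f.coeff (g i) * ((g i (σ i) : ℤ) : ℂ) * ((g i i : ℤ) : ℂ))) := by
        refine Finset.sum_congr rfl fun σ _ => ?_
        rw [h1 σ, Finset.smul_sum]
        exact Finset.sum_congr rfl fun g _ => (AddMonoidAlgebra.smul_single _ _ _)
    _ = ∑ g ∈ Fintype.piFinset (fun _ : Fin n => f.coeff.support),
          AddMonoidAlgebra.single (∑ i, g i)
            (∑ σ : Equiv.Perm (Fin n), Equiv.Perm.sign σ •
              ∏ i, (f.coeff (g i) * ((g i (σ i) : ℤ) : ℂ) * ((g i i : ℤ) : ℂ))) := by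
        rw [Finset.sum_comm]
        refine Finset.sum_congr rfl fun g _ => ?_
        exact (map_sum (AddMonoidAlgebra.singleAddHom _) _ _).symm
    _ = _ := by
        refine Finset.sum_congr rfl fun g _ => ?_
        congr 1
        have h2 : ∀ σ : Equiv.Perm (Fin n),
            (∏ i, (f.coeff (g i) * ((g i (σ i) : ℤ) : ℂ) * ((g i i : ℤ) : ℂ)))
              = (∏ i, (f.coeff (g i) * ((g i i : ℤ) : ℂ))) * ∏ i, ((g i (σ i) : ℤ) : ℂ) := by
          intro σ
          rw [← Finset.prod_mul_distrib]
          exact Finset.prod_congr rfl fun i _ => by ring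
        calc (∑ σ : Equiv.Perm (Fin n), Equiv.Perm.sign σ •
                ∏ i, (f.coeff (g i) * ((g i (σ i) : ℤ) : ℂ) * ((g i i : ℤ) : ℂ)))
            = ∑ σ : Equiv.Perm (Fin n),
                (∏ i, (f.coeff (g i) * ((g i i : ℤ) : ℂ))) *
                  (Equiv.Perm.sign σ • ∏ i, ((g i (σ i) : ℤ) : ℂ)) := by
              refine Finset.sum_congr rfl fun σ _ => ?_
              rw [h2 σ, mul_smul_comm]
          _ = (∏ i, (f.coeff (g i) * ((g i i : ℤ) : ℂ))) * (colMatC g).det := by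
              rw [← Finset.mul_sum, Matrix.det_apply]
              rfl

open MvPolynomial in
lemma exists_w_ne (D : Finset (Fin n → ℤ)) (hD : (0 : Fin n → ℤ) ∉ D) :
    ∃ w : Fin n → ℤ, ∀ d ∈ D, (∑ k, w k * d k) ≠ 0 := by
  classical
  by_contra hcon
  push_neg at hcon
  set P : MvPolynomial (Fin n) ℤ := ∏ d ∈ D, (∑ k, C (d k) * X k) with hP
  have hfac : ∀ d ∈ D, (∑ k, C (d k) * X k : MvPolynomial (Fin n) ℤ) ≠ 0 := by
    intro d hd hzero
    have hd0 : d ≠ 0 := fun h => hD (h ▸ hd)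
    obtain ⟨k, hk⟩ : ∃ k, d k ≠ 0 := by
      by_contra hall; push_neg at hall; exact hd0 (funext hall)
    have := congrArg (coeff (Finsupp.single k 1)) hzero
    rw [coeff_sum] at this
    have hterm : ∀ j : Fin n, coeff (Finsupp.single k 1) (C (d j) * X j : MvPolynomial (Fin n) ℤ)
        = if j = k then d j else 0 := by
      intro j
      rw [coeff_C_mul, coeff_X']
      by_cases hjk : j = k
      · subst hjk; simp
      · rw [if_neg (fun h => hjk (Finsupp.single_left_injective one_ne_zero h)),
          if_neg hjk, mul_zero]
    rw [Finset.sum_congr rfl fun j _ => hterm j, Finset.sum_ite_eq' Finset.univ k] at this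
    simp only [Finset.mem_univ, if_true, coeff_zero] at this
    exact hk this
  have hPne : P ≠ 0 := Finset.prod_ne_zero_iff.mpr hfac
  apply hPne
  apply MvPolynomial.funext
  intro w
  obtain ⟨d, hd, hd0⟩ := hcon w
  rw [map_zero, hP, map_prod]
  apply Finset.prod_eq_zero hd
  rw [map_sum]
  simpa [mul_comm] using hd0

lemma exists_generic_w (T : Finset (Fin n → ℤ)) :
    ∃ w : Fin n → ℤ, ∀ I ∈ T, ∀ J ∈ T, (∑ k, w k * I k) = (∑ k, w k * J k) → I = J := by
  classical
  set D : Finset (Fin n → ℤ) :=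
    ((T ×ˢ T).filter (fun p => p.1 ≠ p.2)).image (fun p => p.1 - p.2) with hD
  have h0 : (0 : Fin n → ℤ) ∉ D := by
    intro h
    rw [hD, Finset.mem_image] at h
    obtain ⟨p, hp, hp0⟩ := h
    rw [Finset.mem_filter] at hp
    exact hp.2 (sub_eq_zero.mp hp0)
  obtain ⟨w, hw⟩ := exists_w_ne D h0
  refine ⟨w, fun I hI J hJ heq => ?_⟩
  by_contra hne
  have hmem : I - J ∈ D := by
    rw [hD, Finset.mem_image]
    exact ⟨(I, J), Finset.mem_filter.mpr ⟨Finset.mem_product.mpr ⟨hI, hJ⟩, hne⟩, rfl⟩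
  apply hw _ hmem
  have : ∀ k, w k * (I - J) k = w k * I k - w k * J k := by
    intro k; simp [Pi.sub_apply]; ring
  rw [Finset.sum_congr rfl fun k _ => this k, Finset.sum_sub_distrib, heq, sub_self]

/-- cast an integer vector to a rational vector -/
def EQ {n : ℕ} (I : Fin n → ℤ) : Fin n → ℚ := fun k => (I k : ℚ)

lemma exists_indep_tuple (T : Finset (Fin n → ℤ))
    (hc : ∀ v : Fin n → ℤ, v ≠ 0 → ∃ I ∈ T, (∑ k, v k * I k) ≠ 0) :
    ∃ g : Fin n → (Fin n → ℤ), (∀ i, g i ∈ T) ∧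
      (Matrix.of fun i j => ((g i j : ℤ) : ℚ)).det ≠ 0 := by
  classical
  set S : Set (Fin n → ℚ) := EQ '' ↑T with hS
  have hspan : Submodule.span ℚ S = ⊤ := by
    by_contra hlt
    obtain ⟨φ, hφne, hφbot⟩ :=
      Submodule.exists_dual_map_eq_bot_of_lt_top (lt_top_iff_ne_top.mpr hlt) inferInstance
    have hker : ∀ x ∈ Submodule.span ℚ S, φ x = 0 := by
      intro x hx
      have : φ x ∈ Submodule.map φ (Submodule.span ℚ S) := Submodule.mem_map_of_mem hx
      rw [hφbot] at this
      exact this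
    set v' : Fin n → ℚ := fun k => φ (fun j => if k = j then 1 else 0) with hv'
    have hφeq : ∀ x : Fin n → ℚ, φ x = ∑ k, x k * v' k := by
      intro x
      rw [LinearMap.pi_apply_eq_sum_univ φ x]
      simp [hv', smul_eq_mul]
    set d : ℤ := ∏ k, ((v' k).den : ℤ) with hd
    have hdne : d ≠ 0 := by
      rw [hd]
      refine Finset.prod_ne_zero_iff.mpr fun k _ => ?_
      exact_mod_cast (v' k).den_nz
    set v : Fin n → ℤ := fun k => (d / ((v' k).den : ℤ)) * (v' k).num with hv
    have hvq : ∀ k, ((v k : ℤ) : ℚ) = (d : ℚ) * v' k := by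
      intro k
      obtain ⟨e, he⟩ : ((v' k).den : ℤ) ∣ d := Finset.dvd_prod_of_mem _ (Finset.mem_univ k)
      have hden : ((v' k).den : ℤ) ≠ 0 := by exact_mod_cast (v' k).den_nz
      have : v k = e * (v' k).num := by
        rw [hv]; simp only []
        rw [he, Int.mul_ediv_cancel_left _ hden]
      have hnd : ((v' k).num : ℚ) = v' k * ((v' k).den : ℚ) := by
        have hden0 : (((v' k).den : ℕ) : ℚ) ≠ 0 := by exact_mod_cast (v' k).den_nz
        have h := Rat.num_div_den (v' k)
        rw [div_eq_iff hden0] at h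
        exact h
      rw [this, he]
      push_cast [hnd]
      ring
    have hvne : v ≠ 0 := by
      obtain ⟨k, hk⟩ : ∃ k, v' k ≠ 0 := by
        by_contra hall
        push_neg at hall
        apply hφne
        apply LinearMap.ext
        intro x
        rw [hφeq x]
        simp [hall]
      intro h0
      have : ((v k : ℤ) : ℚ) = 0 := by rw [congrFun h0 k]; simp
      rw [hvq k] at this
      rcases mul_eq_zero.mp this with h | h
      · exact hdne (by exact_mod_cast h)
      · exact hk h
    obtain ⟨I, hIT, hIne⟩ := hc v hvne
    apply hIne
    have hEQ : φ (EQ I) = 0 :=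
      hker _ (Submodule.subset_span (Set.mem_image_of_mem _ (Finset.mem_coe.mpr hIT)))
    rw [hφeq] at hEQ
    have : ((∑ k, v k * I k : ℤ) : ℚ) = (d : ℚ) * ∑ k, (EQ I) k * v' k := by
      push_cast
      rw [Finset.mul_sum]
      refine Finset.sum_congr rfl fun k _ => ?_
      have := hvq k
      push_cast at this
      rw [EQ]
      calc ((v k : ℚ)) * (I k : ℚ) = ((d : ℚ) * v' k) * (I k : ℚ) := by rw [this]
        _ = (d:ℚ) * ((I k : ℚ) * v' k) := by ring
    have h0 : ((∑ k, v k * I k : ℤ) : ℚ) = 0 := by rw [this, hEQ, mul_zero]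
    exact_mod_cast h0
  -- extract an independent tuple
  obtain ⟨b, hbS, hbspan, hbli⟩ := exists_linearIndependent ℚ S
  have hbtop : Submodule.span ℚ b = ⊤ := by rw [hbspan, hspan]
  let B : Module.Basis b ℚ (Fin n → ℚ) := Module.Basis.mk hbli (by rw [Subtype.range_coe, hbtop])
  haveI : Fintype b := FiniteDimensional.fintypeBasisIndex B
  have hcard : Fintype.card b = n := by
    have h1 := Module.finrank_eq_card_basis B
    rw [Module.finrank_pi ℚ] at h1
    simp only [Fintype.card_fin] at h1
    omega
  let e : Fin n ≃ b := (Fintype.equivFinOfCardEq hcard).symm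
  have hmem : ∀ i : Fin n, ((e i : Fin n → ℚ)) ∈ S := fun i => hbS (e i).2
  have hex : ∀ i : Fin n, ∃ I, I ∈ T ∧ EQ I = (e i : Fin n → ℚ) := by
    intro i
    obtain ⟨I, hI, hIe⟩ := hmem i
    exact ⟨I, Finset.mem_coe.mp hI, hIe⟩
  choose g hgT hge using hex
  refine ⟨g, hgT, ?_⟩
  have hrows : (fun i => (fun j => ((g i j : ℤ) : ℚ))) = fun i => ((e i : Fin n → ℚ)) := by
    funext i
    exact hge i
  have hli : LinearIndependent ℚ (fun i : Fin n => ((e i : Fin n → ℚ))) :=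
    hbli.comp e e.injective
  have hliA : LinearIndependent ℚ (fun i => (Matrix.of fun i j => ((g i j : ℤ) : ℚ)) i) := by
    rw [show (fun i => (Matrix.of fun i j => ((g i j : ℤ) : ℚ)) i)
        = fun i => (fun j => ((g i j : ℤ) : ℚ)) from rfl, hrows]
    exact hli
  exact (Matrix.isUnit_iff_isUnit_det _).mp
    (Matrix.linearIndependent_rows_iff_isUnit.mp hliA) |>.ne_zero
/-- matrix whose rows are `g i`, over ℚ -/
def rowQ (g : Fin n → (Fin n → ℤ)) : Matrix (Fin n) (Fin n) ℚ :=
  Matrix.of fun i j => ((g i j : ℤ) : ℚ)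

def dotw (w : Fin n → ℤ) (I : Fin n → ℤ) : ℤ := ∑ k, w k * I k

def Wt (w : Fin n → ℤ) (g : Fin n → (Fin n → ℤ)) : ℤ := ∑ i, dotw w (g i)

lemma rowQ_row (g : Fin n → (Fin n → ℤ)) (i : Fin n) : rowQ g i = EQ (g i) := rfl

lemma vecMul_eq_sum' (v : Fin n → ℚ) (M : Matrix (Fin n) (Fin n) ℚ) :
    Matrix.vecMul v M = ∑ i, v i • M i := by
  funext j
  rw [Matrix.vecMul, dotProduct, Finset.sum_apply]
  exact Finset.sum_congr rfl fun i _ => rfl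

lemma exchange_aux (T : Finset (Fin n → ℤ)) (w : Fin n → ℤ)
    (hw : ∀ I ∈ T, ∀ J ∈ T, dotw w I = dotw w J → I = J)
    (g h : Fin n → (Fin n → ℤ)) (hgT : ∀ i, g i ∈ T) (hhT : ∀ i, h i ∈ T)
    (hg : (rowQ g).det ≠ 0) (hh : (rowQ h).det ≠ 0)
    (hmax : ∀ g' : Fin n → (Fin n → ℤ), (∀ i, g' i ∈ T) → (rowQ g').det ≠ 0 →
      Wt w g' ≤ Wt w g)
    (hWh : Wt w h = Wt w g)
    (e : Fin n → ℤ) (i₀ : Fin n) (hei : g i₀ = e) (heg : ∀ i, h i ≠ e)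
    (hemax : ∀ x : Fin n → ℤ,
      (((∃ i, g i = x) ∧ (∀ i, h i ≠ x)) ∨ ((∃ i, h i = x) ∧ (∀ i, g i ≠ x))) →
        dotw w x ≤ dotw w e) :
    False := by
  classical
  have hgli : LinearIndependent ℚ (fun i => rowQ g i) :=
    Matrix.linearIndependent_rows_iff_isUnit.mpr
      ((Matrix.isUnit_iff_isUnit_det _).mpr (isUnit_iff_ne_zero.mpr hg))
  have hH : IsUnit (rowQ h).det := isUnit_iff_ne_zero.mpr hh
  set c : Fin n → ℚ := Matrix.vecMul (EQ e) (rowQ h)⁻¹ with hc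
  have hce : EQ e = ∑ k, c k • rowQ h k := by
    rw [← vecMul_eq_sum', hc, Matrix.vecMul_vecMul, Matrix.nonsing_inv_mul _ hH,
      Matrix.vecMul_one]
  -- find j with c j ≠ 0 and h j not in range of g
  obtain ⟨j, hcj, hhj⟩ : ∃ j, c j ≠ 0 ∧ ∀ i, g i ≠ h j := by
    by_contra hcon
    push_neg at hcon
    have hmem : EQ e ∈ Submodule.span ℚ ((fun i => rowQ g i) '' {i | i ≠ i₀}) := by
      rw [hce]
      apply Submodule.sum_mem
      intro k _
      by_cases hk : c k = 0
      · rw [hk, zero_smul]; exact Submodule.zero_mem _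
      · obtain ⟨i, hi⟩ := hcon k hk
        have hii : i ≠ i₀ := by
          intro hii
          exact heg k (by rw [← hi, hii, hei])
        apply Submodule.smul_mem
        apply Submodule.subset_span
        exact ⟨i, hii, show rowQ g i = rowQ h k by rw [rowQ_row, rowQ_row, hi]⟩
    have hnot := hgli.notMem_span_image (s := {i | i ≠ i₀}) (x := i₀) (by simp)
    rw [rowQ_row, hei] at hnot
    exact hnot hmem
  -- h j is in the symmetric difference, with smaller weight
  have hje : h j ≠ e := fun hq => (heg j) hq
  have hlt : dotw w (h j) < dotw w e := by
    have hle : dotw w (h j) ≤ dotw w e :=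
      hemax (h j) (Or.inr ⟨⟨j, rfl⟩, fun i hi => hhj i hi⟩)
    rcases lt_or_eq_of_le hle with hlt | heq
    · exact hlt
    · exact absurd (hw _ (hhT j) _ (hei ▸ hgT i₀) heq) hje
  -- the improved tuple
  set h' : Fin n → (Fin n → ℤ) := Function.update h j e with hh'
  have hh'T : ∀ i, h' i ∈ T := by
    intro i
    rw [hh', Function.update_apply]
    split_ifs with hij
    · exact hei ▸ hgT i₀
    · exact hhT i
  have hrow : rowQ h' = (rowQ h).updateRow j (EQ e) := by
    funext r s
    rw [Matrix.updateRow_apply]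
    show ((Function.update h j e r) s : ℚ) = _
    rw [Function.update_apply]
    split_ifs with hr
    · rfl
    · rfl
  have hdet' : (rowQ h').det ≠ 0 := by
    rw [hrow, hce, Matrix.det_updateRow_sum]
    exact mul_ne_zero hcj hh
  have hW' : Wt w h' = dotw w e + (Wt w h - dotw w (h j)) := by
    rw [hh', Wt]
    have hcomp : ∀ i, dotw w (Function.update h j e i)
        = Function.update (fun i => dotw w (h i)) j (dotw w e) i := by
      intro i
      rw [Function.update_apply, Function.update_apply]
      split_ifs with hi
      · rfl
      · rfl
    rw [Finset.sum_congr rfl fun i _ => hcomp i,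
      Finset.sum_update_of_mem (Finset.mem_univ j)]
    have h9 := Finset.add_sum_erase Finset.univ (fun i => dotw w (h i)) (Finset.mem_univ j)
    rw [Finset.sdiff_singleton_eq_erase]
    rw [Wt]
    have h10 : (fun i => dotw w (h i)) j + ∑ x ∈ Finset.univ.erase j, (fun i => dotw w (h i)) x = ∑ x, (fun i => dotw w (h i)) x := h9
    simp only [] at h10
    omega
  have := hmax h' hh'T hdet'
  omega

lemma exchange (T : Finset (Fin n → ℤ)) (w : Fin n → ℤ)
    (hw : ∀ I ∈ T, ∀ J ∈ T, dotw w I = dotw w J → I = J)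
    (g h : Fin n → (Fin n → ℤ)) (hgT : ∀ i, g i ∈ T) (hhT : ∀ i, h i ∈ T)
    (hg : (rowQ g).det ≠ 0) (hh : (rowQ h).det ≠ 0)
    (hmax : ∀ g' : Fin n → (Fin n → ℤ), (∀ i, g' i ∈ T) → (rowQ g').det ≠ 0 →
      Wt w g' ≤ Wt w g)
    (hWh : Wt w h = Wt w g) :
    Finset.image g Finset.univ = Finset.image h Finset.univ := by
  classical
  by_contra hne
  set SD := (Finset.image g Finset.univ \ Finset.image h Finset.univ)
    ∪ (Finset.image h Finset.univ \ Finset.image g Finset.univ) with hSD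
  have hSDne : SD.Nonempty := by
    rw [Finset.nonempty_iff_ne_empty]
    intro hempty
    rw [hSD, Finset.union_eq_empty] at hempty
    exact hne (Finset.Subset.antisymm
      (Finset.sdiff_eq_empty_iff_subset.mp hempty.1)
      (Finset.sdiff_eq_empty_iff_subset.mp hempty.2))
  obtain ⟨e, heSD, hemax⟩ := Finset.exists_max_image SD (dotw w) hSDne
  have hemax' : ∀ x : Fin n → ℤ,
      (((∃ i, g i = x) ∧ (∀ i, h i ≠ x)) ∨ ((∃ i, h i = x) ∧ (∀ i, g i ≠ x))) →
        dotw w x ≤ dotw w e := by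
    intro x hx
    apply hemax
    rw [hSD, Finset.mem_union, Finset.mem_sdiff, Finset.mem_sdiff]
    rcases hx with ⟨⟨i, hi⟩, hnx⟩ | ⟨⟨i, hi⟩, hnx⟩
    · exact Or.inl ⟨Finset.mem_image.mpr ⟨i, Finset.mem_univ i, hi⟩,
        fun hmem => by obtain ⟨i', _, hi'⟩ := Finset.mem_image.mp hmem; exact hnx i' hi'⟩
    · exact Or.inr ⟨Finset.mem_image.mpr ⟨i, Finset.mem_univ i, hi⟩,
        fun hmem => by obtain ⟨i', _, hi'⟩ := Finset.mem_image.mp hmem; exact hnx i' hi'⟩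
  rw [hSD, Finset.mem_union, Finset.mem_sdiff, Finset.mem_sdiff] at heSD
  rcases heSD with ⟨hin, hnot⟩ | ⟨hin, hnot⟩
  · obtain ⟨i₀, _, hi₀⟩ := Finset.mem_image.mp hin
    have hnh : ∀ i, h i ≠ e :=
      fun i hi => hnot (Finset.mem_image.mpr ⟨i, Finset.mem_univ i, hi⟩)
    exact exchange_aux T w hw g h hgT hhT hg hh hmax hWh e i₀ hi₀ hnh hemax'
  · obtain ⟨i₀, _, hi₀⟩ := Finset.mem_image.mp hin
    have hng : ∀ i, g i ≠ e :=
      fun i hi => hnot (Finset.mem_image.mpr ⟨i, Finset.mem_univ i, hi⟩)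
    have hmax2 : ∀ g' : Fin n → (Fin n → ℤ), (∀ i, g' i ∈ T) → (rowQ g').det ≠ 0 →
        Wt w g' ≤ Wt w h := by
      intro g' h1 h2
      rw [hWh]
      exact hmax g' h1 h2
    exact exchange_aux T w hw h g hhT hgT hh hg hmax2 (hWh.symm ▸ rfl : Wt w g = Wt w h)
      e i₀ hi₀ hng (fun x hx => hemax' x (Or.symm hx))
def rowZ (g : Fin n → (Fin n → ℤ)) : Matrix (Fin n) (Fin n) ℤ :=
  Matrix.of fun i j => g i j

lemma rowQ_det (g : Fin n → (Fin n → ℤ)) :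
    (rowQ g).det = (((rowZ g).det : ℤ) : ℚ) := by
  rw [show rowQ g = (Int.castRingHom ℚ).mapMatrix (rowZ g) from rfl, ← RingHom.map_det]
  rfl

lemma colMatC_det (g : Fin n → (Fin n → ℤ)) :
    (colMatC g).det = (((rowZ g).det : ℤ) : ℂ) := by
  rw [show colMatC g = ((Int.castRingHom ℂ).mapMatrix (rowZ g))ᵀ from rfl,
    Matrix.det_transpose, ← RingHom.map_det]
  rfl

lemma injective_of_det (g : Fin n → (Fin n → ℤ)) (hg : (rowQ g).det ≠ 0) :
    Function.Injective g := by
  have hli : LinearIndependent ℚ (fun i => rowQ g i) :=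
    Matrix.linearIndependent_rows_iff_isUnit.mpr
      ((Matrix.isUnit_iff_isUnit_det _).mpr (isUnit_iff_ne_zero.mpr hg))
  intro a b hab
  apply hli.injective
  show rowQ g a = rowQ g b
  funext j
  show ((g a j : ℤ) : ℚ) = ((g b j : ℤ) : ℚ)
  rw [hab]

lemma dotw_sum (w : Fin n → ℤ) (g : Fin n → (Fin n → ℤ)) :
    dotw w (∑ i, g i) = Wt w g := by
  rw [dotw, Wt]
  have : ∀ k, w k * (∑ i, g i) k = ∑ i, w k * g i k := by
    intro k
    rw [Finset.sum_apply, Finset.mul_sum]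
  rw [Finset.sum_congr rfl fun k _ => this k, Finset.sum_comm]
  exact Finset.sum_congr rfl fun i _ => rfl

lemma det_ne_zero_of_no_orth (f : LaurentPoly n)
    (hc : ∀ v : Fin n → ℤ, v ≠ 0 → ∃ I ∈ f.coeff.support, (∑ k, v k * I k) ≠ 0) :
    (logHessian f).det ≠ 0 := by
  classical
  obtain ⟨g₁, hg₁T, hg₁det⟩ := exists_indep_tuple f.coeff.support hc
  obtain ⟨w, hw⟩ := exists_generic_w f.coeff.support
  have hw' : ∀ I ∈ f.coeff.support, ∀ J ∈ f.coeff.support, dotw w I = dotw w J → I = J := hw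
  set 𝒢 : Finset (Fin n → (Fin n → ℤ)) :=
    (Fintype.piFinset fun _ : Fin n => f.coeff.support).filter (fun g => (rowQ g).det ≠ 0) with h𝒢
  have h𝒢ne : 𝒢.Nonempty :=
    ⟨g₁, Finset.mem_filter.mpr ⟨Fintype.mem_piFinset.mpr hg₁T, hg₁det⟩⟩
  obtain ⟨gm, hgm𝒢, hgmmax⟩ := Finset.exists_max_image 𝒢 (Wt w) h𝒢ne
  rw [h𝒢, Finset.mem_filter, Fintype.mem_piFinset] at hgm𝒢
  obtain ⟨hgmT, hgmdet⟩ := hgm𝒢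
  have hgmmax' : ∀ g' : Fin n → (Fin n → ℤ), (∀ i, g' i ∈ f.coeff.support) →
      (rowQ g').det ≠ 0 → Wt w g' ≤ Wt w gm := by
    intro g' h1 h2
    exact hgmmax g' (Finset.mem_filter.mpr ⟨Fintype.mem_piFinset.mpr h1, h2⟩)
  set J : Fin n → ℤ := ∑ i, gm i with hJ
  intro hdet0
  have hco := congrArg (fun p : LaurentPoly n => p.coeff J) hdet0
  rw [det_logHessian_eq] at hco
  simp only [AddMonoidAlgebra.coeff_sum, AddMonoidAlgebra.coeff_single, AddMonoidAlgebra.coeff_zero, Finset.sum_apply', Finsupp.single_apply, Finsupp.coe_zero, Pi.zero_apply] at hco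
  set c : (Fin n → (Fin n → ℤ)) → ℂ :=
    fun g => (∏ i, (f.coeff (g i) * ((g i i : ℤ) : ℂ))) * (colMatC g).det with hcdef
  have hco2 : ∑ g ∈ (Fintype.piFinset fun _ : Fin n => f.coeff.support).filter
      (fun g => (∑ i, g i) = J), c g = 0 := by
    rw [Finset.sum_filter]
    exact hco
  -- restrict to nonzero determinant
  set B : Finset (Fin n → (Fin n → ℤ)) :=
    ((Fintype.piFinset fun _ : Fin n => f.coeff.support).filter
      (fun g => (∑ i, g i) = J)).filter (fun g => (rowQ g).det ≠ 0) with hB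
  have hco3 : ∑ g ∈ B, c g = 0 := by
    rw [← hco2, hB]
    rw [eq_comm, ← Finset.sum_filter_add_sum_filter_not
      ((Fintype.piFinset fun _ : Fin n => f.coeff.support).filter (fun g => (∑ i, g i) = J))
      (fun g => (rowQ g).det ≠ 0) c]
    have : ∀ g ∈ ((Fintype.piFinset fun _ : Fin n => f.coeff.support).filter
        (fun g => (∑ i, g i) = J)).filter (fun g => ¬ (rowQ g).det ≠ 0), c g = 0 := by
      intro g hg
      rw [Finset.mem_filter] at hg
      have hz : (rowZ g).det = 0 := by
        have := not_not.mp hg.2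
        rw [rowQ_det] at this
        exact_mod_cast this
      rw [hcdef]
      simp only []
      rw [colMatC_det, hz]
      simp
    rw [Finset.sum_congr rfl this]
    simp
  -- biject B with permutations
  have hmem : ∀ σ : Equiv.Perm (Fin n), gm ∘ σ ∈ B := by
    intro σ
    rw [hB, Finset.mem_filter, Finset.mem_filter, Fintype.mem_piFinset]
    refine ⟨⟨fun i => hgmT (σ i), ?_⟩, ?_⟩
    · show ∑ i, gm (σ i) = J
      rw [hJ]
      exact Equiv.sum_comp σ gm
    · have : rowQ (gm ∘ σ) = (rowQ gm).submatrix σ id := rfl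
      rw [this, Matrix.det_permute]
      apply mul_ne_zero _ hgmdet
      rcases Int.units_eq_one_or (Equiv.Perm.sign σ) with h | h <;> rw [h] <;> simp
  have hsurj : ∀ g ∈ B, ∃ σ : Equiv.Perm (Fin n), gm ∘ σ = g := by
    intro g hg
    rw [hB, Finset.mem_filter, Finset.mem_filter, Fintype.mem_piFinset] at hg
    obtain ⟨⟨hgT, hgsum⟩, hgdet⟩ := hg
    have hWg : Wt w g = Wt w gm := by
      have h1 : Wt w g = dotw w J := by rw [← hgsum, dotw_sum]
      have h2 : Wt w gm = dotw w J := by rw [hJ, dotw_sum]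
      rw [h1, h2]
    have himg := exchange f.coeff.support w hw' gm g hgmT hgT hgmdet hgdet hgmmax' hWg
    have hginj := injective_of_det g hgdet
    have hgminj := injective_of_det gm hgmdet
    have hex : ∀ i, ∃ j, gm j = g i := by
      intro i
      have : g i ∈ Finset.image gm Finset.univ := by
        rw [himg]
        exact Finset.mem_image.mpr ⟨i, Finset.mem_univ i, rfl⟩
      obtain ⟨j, _, hj⟩ := Finset.mem_image.mp this
      exact ⟨j, hj⟩
    choose F hF using hex
    have hFinj : Function.Injective F := by
      intro a b hab
      apply hginj
      rw [← hF a, ← hF b, hab]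
    have hFbij : Function.Bijective F := Finite.injective_iff_bijective.mp hFinj
    exact ⟨Equiv.ofBijective F hFbij, funext fun i => hF i⟩
  have hbij : ∑ g ∈ B, c g = ∑ σ : Equiv.Perm (Fin n), c (gm ∘ σ) := by
    rw [eq_comm]
    refine Finset.sum_bij (fun (σ : Equiv.Perm (Fin n)) _ => gm ∘ σ) ?_ ?_ ?_ ?_
    · intro σ _; exact hmem σ
    · intro σ _ τ _ hst
      have hgminj := injective_of_det gm hgmdet
      apply Equiv.ext
      intro i
      exact hgminj (congrFun hst i)
    · intro g hg
      obtain ⟨σ, hσ⟩ := hsurj g hg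
      exact ⟨σ, Finset.mem_univ σ, hσ⟩
    · intro σ _; rfl
  -- evaluate the permutation sum
  set D : ℂ := (colMatC gm).det with hD
  have hcσ : ∀ σ : Equiv.Perm (Fin n),
      c (gm ∘ σ) = (∏ i, f.coeff (gm i)) *
        ((((Equiv.Perm.sign σ : ℤ) : ℂ)) * (∏ i, ((gm (σ i) i : ℤ) : ℂ)) * D) := by
    intro σ
    rw [hcdef]
    simp only [Function.comp_apply]
    have h1 : colMatC (gm ∘ σ) = (colMatC gm).submatrix id σ := rfl
    rw [h1, Matrix.det_permute']
    have h2 : (∏ i, (f.coeff (gm (σ i)) * ((gm (σ i) i : ℤ) : ℂ)))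
        = (∏ i, f.coeff (gm (σ i))) * ∏ i, ((gm (σ i) i : ℤ) : ℂ) := Finset.prod_mul_distrib
    rw [h2, Equiv.prod_comp σ (fun i => f.coeff (gm i))]
    push_cast
    ring
  have hsum : ∑ σ : Equiv.Perm (Fin n), c (gm ∘ σ) = (∏ i, f.coeff (gm i)) * (D * D) := by
    rw [Finset.sum_congr rfl fun σ _ => hcσ σ, ← Finset.mul_sum]
    congr 1
    have : ∑ σ : Equiv.Perm (Fin n),
        (((Equiv.Perm.sign σ : ℤ) : ℂ)) * (∏ i, ((gm (σ i) i : ℤ) : ℂ)) * D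
        = (∑ σ : Equiv.Perm (Fin n),
            (((Equiv.Perm.sign σ : ℤ) : ℂ)) * ∏ i, ((gm (σ i) i : ℤ) : ℂ)) * D :=
      (Finset.sum_mul _ _ _).symm
    rw [this]
    congr 1
    have h9 : (Matrix.of fun x y => ((gm x y : ℤ) : ℂ)) = (colMatC gm)ᵀ := rfl
    rw [hD, ← Matrix.det_transpose (colMatC gm), ← h9, Matrix.det_apply']
    exact Finset.sum_congr rfl fun σ _ => rfl
  -- final contradiction
  rw [hbij, hsum] at hco3
  have hDne : D ≠ 0 := by
    rw [hD, colMatC_det]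
    rw [rowQ_det] at hgmdet
    exact_mod_cast hgmdet
  have hPne : (∏ i, f.coeff (gm i)) ≠ 0 :=
    Finset.prod_ne_zero_iff.mpr fun i _ => Finsupp.mem_support_iff.mp (hgmT i)
  exact (mul_ne_zero hPne (mul_ne_zero hDne hDne)) hco3
lemma det_eq_zero_of_orth (f : LaurentPoly n) (v : Fin n → ℤ) (hv : v ≠ 0)
    (h : ∀ I ∈ f.coeff.support, (∑ k, v k * I k) = 0) : (logHessian f).det = 0 := by
  classical
  set c : Fin n → LaurentPoly n := fun j => AddMonoidAlgebra.single 0 ((v j : ℂ)) with hc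
  have hmv : (logHessian f).mulVec c = 0 := by
    funext i
    ext K
    have : ((logHessian f).mulVec c i).coeff K
        = ∑ j, (logHessian f i j * c j).coeff K := by
      rw [Matrix.mulVec, dotProduct, AddMonoidAlgebra.coeff_sum, Finset.sum_apply']
    rw [this]
    have h2 : ∀ j : Fin n, (logHessian f i j * c j).coeff K
        = f.coeff K * (K i : ℂ) * (K j : ℂ) * (v j : ℂ) := by
      intro j
      rw [hc]
      rw [AddMonoidAlgebra.coeff_mul_single_zero, logHessian_apply]
    rw [Finset.sum_congr rfl fun j _ => h2 j]
    have h3 : (∑ j, f.coeff K * (K i : ℂ) * (K j : ℂ) * (v j : ℂ))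
        = f.coeff K * (K i : ℂ) * ((∑ j, v j * K j : ℤ) : ℂ) := by
      push_cast
      rw [Finset.mul_sum]
      exact Finset.sum_congr rfl fun j _ => by ring
    rw [h3]
    by_cases hK : K ∈ f.coeff.support
    · rw [h K hK]
      simp
    · rw [Finsupp.notMem_support_iff.mp hK]
      simp
  -- det • c = 0
  have h4 : (logHessian f).det • c = 0 := by
    have := congrArg ((logHessian f).adjugate.mulVec) hmv
    rw [Matrix.mulVec_mulVec, Matrix.adjugate_mul, Matrix.smul_mulVec,
      Matrix.one_mulVec, Matrix.mulVec_zero] at this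
    exact this
  obtain ⟨j, hj⟩ : ∃ j, v j ≠ 0 := by
    by_contra hall
    push_neg at hall
    exact hv (funext hall)
  have h5 : (logHessian f).det * c j = 0 := congrFun h4 j
  rw [hc] at h5
  have h6 := congrArg (· * AddMonoidAlgebra.single (0 : Fin n → ℤ) (((v j : ℂ))⁻¹)) h5
  simp only [zero_mul, mul_assoc] at h6
  rw [AddMonoidAlgebra.single_mul_single, add_zero,
    mul_inv_cancel₀ (by exact_mod_cast hj : ((v j : ℂ)) ≠ 0)] at h6
  rw [← AddMonoidAlgebra.one_def, mul_one] at h6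
  exact h6
/-- From a nonzero integer vector orthogonal to the support, produce a unimodular matrix
whose pullback kills the last variable. -/
lemma exists_unimodular (hn : 0 < n) (f : LaurentPoly n) (v : Fin n → ℤ) (hv : v ≠ 0)
    (horth : ∀ I ∈ f.coeff.support, (∑ k, v k * I k) = 0) :
    ∃ A : Matrix (Fin n) (Fin n) ℤ, (A.det = 1 ∨ A.det = -1) ∧
      ∀ I ∈ (monoidalPullback A f).coeff.support, I ⟨n - 1, by omega⟩ = 0 := by
  classical
  -- the saturated orthogonal submodule
  set K : Submodule ℤ (Fin n → ℤ) :=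
    { carrier := {x | ∀ I ∈ f.coeff.support, (∑ k, x k * I k) = 0}
      add_mem' := by
        intro a b ha hb I hI
        have : ∀ k, (a + b) k * I k = a k * I k + b k * I k := by
          intro k; simp [add_mul]
        rw [Finset.sum_congr rfl fun k _ => this k, Finset.sum_add_distrib, ha I hI, hb I hI,
          add_zero]
      zero_mem' := by
        intro I hI
        simp
      smul_mem' := by
        intro m a ha I hI
        have : ∀ k, (m • a) k * I k = m * (a k * I k) := by
          intro k; simp [mul_assoc]
        rw [Finset.sum_congr rfl fun k _ => this k, ← Finset.mul_sum, ha I hI, mul_zero] } with hK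
  have hvK : v ∈ K := horth
  -- Smith normal form
  obtain ⟨m, snf⟩ := Submodule.smithNormalForm (Pi.basisFun ℤ (Fin n)) K
  have hm : 0 < m := by
    rcases Nat.eq_zero_or_pos m with h0 | h
    · exfalso
      subst h0
      have hz : (⟨v, hvK⟩ : K) = 0 := by
        have h := snf.bN.sum_repr ⟨v, hvK⟩
        rw [Finset.univ_eq_empty, Finset.sum_empty] at h
        exact h.symm
      have : v = 0 := congrArg Subtype.val hz
      exact hv this
    · exact h
  set i0 : Fin m := ⟨0, hm⟩ with hi0
  set j0 : Fin n := snf.f i0 with hj0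
  have ha := snf.snf i0
  have hbN0 : ((snf.bN i0 : K) : Fin n → ℤ) ≠ 0 := by
    intro h0
    exact Module.Basis.ne_zero snf.bN i0 (Subtype.ext h0)
  have ha0 : snf.a i0 ≠ 0 := by
    intro h0
    rw [h0, zero_smul] at ha
    exact hbN0 ha
  have hmemK : ((snf.bN i0 : K) : Fin n → ℤ) ∈ K := (snf.bN i0).2
  have hbMK : ∀ I ∈ f.coeff.support, (∑ k, snf.bM j0 k * I k) = 0 := by
    intro I hI
    have h1 := hmemK I hI
    rw [ha] at h1
    have h2 : ∀ k, (snf.a i0 • snf.bM j0) k * I k = snf.a i0 * (snf.bM j0 k * I k) := by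
      intro k
      simp [mul_assoc]
    rw [Finset.sum_congr rfl fun k _ => h2 k, ← Finset.mul_sum] at h1
    rcases mul_eq_zero.mp h1 with h | h
    · exact absurd h ha0
    · exact h
  set last : Fin n := ⟨n - 1, by omega⟩ with hlast
  set e : Fin n ≃ Fin n := Equiv.swap last j0 with he
  set bB : Module.Basis (Fin n) ℤ (Fin n → ℤ) := snf.bM.reindex e.symm with hbB
  set A : Matrix (Fin n) (Fin n) ℤ := (Pi.basisFun ℤ (Fin n)).toMatrix ⇑bB with hA
  have hAdet : IsUnit A.det := by
    apply IsUnit.of_mul_eq_one ((bB.toMatrix ⇑(Pi.basisFun ℤ (Fin n))).det)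
    rw [← Matrix.det_mul, Module.Basis.toMatrix_mul_toMatrix_flip, Matrix.det_one]
  refine ⟨A, Int.isUnit_iff.mp hAdet, ?_⟩
  intro I' hI'
  have hsub := Finsupp.mapDomain_support hI'
  obtain ⟨I, hI, hII'⟩ := Finset.mem_image.mp hsub
  have hAcol : ∀ k, A k last = snf.bM j0 k := by
    intro k
    rw [hA, Module.Basis.toMatrix_apply, Pi.basisFun_repr, hbB, Module.Basis.reindex_apply,
      Equiv.symm_symm, he, Equiv.swap_apply_left]
  have : I' last = ∑ k, A k last * I k := by
    rw [← hII']
    rw [Matrix.mulVec, dotProduct]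
    exact Finset.sum_congr rfl fun k _ => by rw [Matrix.transpose_apply]
  rw [this, Finset.sum_congr rfl fun k _ => by rw [hAcol k]]
  exact hbMK I hI
lemma orth_of_unimodular (hn : 0 < n) (f : LaurentPoly n)
    (A : Matrix (Fin n) (Fin n) ℤ) (hdet : A.det = 1 ∨ A.det = -1)
    (hsupp : ∀ I ∈ (monoidalPullback A f).coeff.support, I ⟨n - 1, by omega⟩ = 0) :
    ∃ v : Fin n → ℤ, v ≠ 0 ∧ ∀ I ∈ f.coeff.support, (∑ k, v k * I k) = 0 := by
  classical
  set last : Fin n := ⟨n - 1, by omega⟩ with hlast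
  have hAunit : IsUnit A.det := by
    rcases hdet with h | h <;> rw [h] <;> simp
  refine ⟨fun k => A k last, ?_, ?_⟩
  · intro h0
    have hc : ∀ k, A k last = 0 := fun k => congrFun h0 k
    have : A.det = 0 := Matrix.det_eq_zero_of_column_eq_zero last hc
    rcases hdet with h | h <;> rw [h] at this <;> simp at this
  · intro I hI
    have hATunit : IsUnit A.transpose.det := by
      rw [Matrix.det_transpose]; exact hAunit
    have hinj : Function.Injective (fun I => A.transpose.mulVec I) := by
      intro x y hxy
      haveI := A.transpose.invertibleOfIsUnitDet hATunit
      have := congrArg (fun z => (A.transpose)⁻¹.mulVec z) hxy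
      simpa [Matrix.mulVec_mulVec, Matrix.nonsing_inv_mul _ hATunit,
        Matrix.one_mulVec] using this
    have hmem : A.transpose.mulVec I ∈ (monoidalPullback A f).coeff.support := by
      rw [monoidalPullback, AddMonoidAlgebra.coeff_ofCoeff, Finsupp.mapDomain_support_of_injective hinj]
      exact Finset.mem_image.mpr ⟨I, hI, rfl⟩
    have := hsupp _ hmem
    rw [Matrix.mulVec, dotProduct] at this
    rw [← this]
    exact Finset.sum_congr rfl fun k _ => by rw [Matrix.transpose_apply]

end HesseAux

/-- **Logarithmic Hesse problem, iff form.**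
A Laurent polynomial `f ∈ S_n` (`n ≥ 1`) has vanishing logarithmic Hessian if and only
if there is `A ∈ M(n,ℤ)` with `det A = ±1` such that `ξ_A^* f` depends on at most `n−1`
variables, i.e. every exponent `I` in the support of `ξ_A^* f` has last coordinate
`I_n = 0`. -/
theorem logarithmic_hesse_iff (n : ℕ) (hn : 1 ≤ n) (f : LaurentPoly n) :
    (logHessian f).det = 0 ↔
      ∃ A : Matrix (Fin n) (Fin n) ℤ, (A.det = 1 ∨ A.det = -1) ∧
        ∀ I ∈ (monoidalPullback A f).coeff.support, I ⟨n - 1, by omega⟩ = 0 := by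
  constructor
  · intro hdet
    have hex : ∃ v : Fin n → ℤ, v ≠ 0 ∧ ∀ I ∈ f.coeff.support, (∑ k, v k * I k) = 0 := by
      by_contra hcon
      push_neg at hcon
      exact HesseAux.det_ne_zero_of_no_orth f (fun v hv => hcon v hv) hdet
    obtain ⟨v, hv, horth⟩ := hex
    exact HesseAux.exists_unimodular hn f v hv horth
  · rintro ⟨A, hdet, hsupp⟩
    obtain ⟨v, hv, horth⟩ := HesseAux.orth_of_unimodular hn f A hdet hsupp
    exact HesseAux.det_eq_zero_of_orth f v hv horth
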